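/- Suppose f : (0,1) → ℝ is C¹ with f(x) → +∞ as x → 1 and f'(x) = 1/v(x) where v is C¹ on [0,1] (after the change of variable) with v(1) = 0 and v'(1) = 0. Then lim_{x→1} (ln |f'(x)|) / f(x) = 0. -/

import Mathlib

open Filter Set

/-- Suppose `f : (0,1) → ℝ` is differentiable with `f x → +∞` as `x → 1⁻`
and `f' = 1 / v` on `(0,1)`, where `v` is C¹ with `v 1 = 0`, `v' 1 = 0`, and
`v > 0` on `(0,1)`. Then `ln |f' x| / f x → 0` as `x → 1⁻`. -/
theorem stmt_15 (f v : ℝ → ℝ)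
    (hfd : DifferentiableOn ℝ f (Ioo 0 1))
    (hftop : Tendsto f (nhdsWithin 1 (Iio 1)) atTop)
    (hv : ContDiff ℝ 1 v) (hv1 : v 1 = 0) (hv'1 : deriv v 1 = 0)
    (hvpos : ∀ x ∈ Ioo (0 : ℝ) 1, 0 < v x)
    (hfv : ∀ x ∈ Ioo (0 : ℝ) 1, deriv f x = 1 / v x) :
    Tendsto (fun x => Real.log |deriv f x| / f x) (nhdsWithin 1 (Iio 1)) (nhds 0) := by
  rw [NormedAddCommGroup.tendsto_nhds_zero]
  intro ε hε
  have hε2 : 0 < ε / 2 := by linarith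
  -- the derivative of v tends to 0 at 1
  have h0 : Tendsto (deriv v) (nhds 1) (nhds 0) := by
    rw [← hv'1]
    exact (hv.continuous_deriv le_rfl).continuousAt
  have hev : ∀ᶠ x in nhds 1, |deriv v x| < ε / 2 := by
    have := Metric.tendsto_nhds.mp h0 (ε / 2) hε2
    simpa [Real.dist_eq] using this
  obtain ⟨δ, hδ, hδ'⟩ := Metric.eventually_nhds_iff.mp hev
  set a : ℝ := max (1 - δ) (1 / 2) with ha_def
  have ha0 : 0 < a := lt_of_lt_of_le (by norm_num) (le_max_right _ _)
  have ha1 : a < 1 := max_lt (by linarith) (by norm_num)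
  have hsub : Ico a 1 ⊆ Ioo 0 1 := fun x hx => ⟨lt_of_lt_of_le ha0 hx.1, hx.2⟩
  have hderiv_small : ∀ x ∈ Ioo a 1, |deriv v x| < ε / 2 := by
    intro x hx
    apply hδ'
    rw [Real.dist_eq, abs_sub_lt_iff]
    have h1 : 1 - δ ≤ a := le_max_left _ _
    constructor <;> linarith [hx.1, hx.2]
  -- monotonicity of (ε/2) f ± log ∘ v on [a, 1)
  have mono : ∀ s : ℝ, |s| = 1 →
      StrictMonoOn (fun x => ε / 2 * f x + s * Real.log (v x)) (Ico a 1) := by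
    intro s hs
    apply strictMonoOn_of_deriv_pos (convex_Ico a 1)
    · exact (continuousOn_const.mul (hfd.continuousOn.mono hsub)).add
        (continuousOn_const.mul ((hv.continuous.continuousOn).log
          fun x hx => (hvpos x (hsub hx)).ne'))
    · intro x hx
      rw [interior_Ico] at hx
      have hx' : x ∈ Ioo (0 : ℝ) 1 := hsub ⟨hx.1.le, hx.2⟩
      have hvx : 0 < v x := hvpos x hx'
      have hfx : DifferentiableAt ℝ f x :=
        hfd.differentiableAt (isOpen_Ioo.mem_nhds hx')
      have hfda : HasDerivAt f (1 / v x) x := hfv x hx' ▸ hfx.hasDerivAt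
      have hvda : HasDerivAt v (deriv v x) x := (hv.differentiable one_ne_zero x).hasDerivAt
      have hlog : HasDerivAt (fun y => Real.log (v y)) (deriv v x / v x) x :=
        hvda.log hvx.ne'
      have hg : HasDerivAt (fun y => ε / 2 * f y + s * Real.log (v y))
          (ε / 2 * (1 / v x) + s * (deriv v x / v x)) x :=
        (hfda.const_mul (ε / 2)).add (hlog.const_mul s)
      rw [hg.deriv]
      have habs := hderiv_small x hx
      have h1 : -(ε / 2) < s * deriv v x := by
        have h2 : |s * deriv v x| = |deriv v x| := by rw [abs_mul, hs, one_mul]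
        have h3 := neg_abs_le (s * deriv v x)
        rw [h2] at h3
        linarith
      have heq : ε / 2 * (1 / v x) + s * (deriv v x / v x)
          = (ε / 2 + s * deriv v x) / v x := by field_simp
      rw [heq]
      exact div_pos (by linarith) hvx
  set M : ℝ := |ε / 2 * f a + Real.log (v a)| + |ε / 2 * f a - Real.log (v a)| with hM
  have E1 : ∀ᶠ x in nhdsWithin 1 (Iio 1), x ∈ Ioo a 1 :=
    Ioo_mem_nhdsLT_of_mem ⟨ha1, le_refl 1⟩
  have E2 : ∀ᶠ x in nhdsWithin 1 (Iio 1), max 1 (2 * M / ε) < f x :=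
    hftop.eventually_gt_atTop _
  filter_upwards [E1, E2] with x hx hfx
  have hx' : x ∈ Ioo (0 : ℝ) 1 := hsub ⟨hx.1.le, hx.2⟩
  have hvx : 0 < v x := hvpos x hx'
  have hfxpos : 0 < f x := by
    have : (1 : ℝ) ≤ max 1 (2 * M / ε) := le_max_left _ _
    linarith
  have hd : deriv f x = 1 / v x := hfv x hx'
  have hlogd : Real.log |deriv f x| = -Real.log (v x) := by
    rw [hd, abs_of_pos (by positivity), one_div, Real.log_inv]
  have b1 := mono 1 (by norm_num) ⟨le_refl a, ha1⟩ ⟨hx.1.le, hx.2⟩ hx.1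
  have b2 := mono (-1) (by norm_num) ⟨le_refl a, ha1⟩ ⟨hx.1.le, hx.2⟩ hx.1
  simp only [one_mul, neg_one_mul, neg_mul] at b1 b2
  have hb : |Real.log (v x)| ≤ ε / 2 * f x + M := by
    rw [abs_le]
    constructor
    · have := neg_abs_le (ε / 2 * f a + Real.log (v a))
      have := abs_nonneg (ε / 2 * f a - Real.log (v a))
      rw [hM]; linarith
    · have := neg_abs_le (ε / 2 * f a - Real.log (v a))
      have := abs_nonneg (ε / 2 * f a + Real.log (v a))
      rw [hM]; linarith
  have hMf : M / f x < ε / 2 := by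
    rw [div_lt_iff₀ hfxpos]
    have h2 : 2 * M / ε < f x := lt_of_le_of_lt (le_max_right 1 _) hfx
    have h3 : M = 2 * M / ε * (ε / 2) := by field_simp
    rw [h3]
    calc 2 * M / ε * (ε / 2) < f x * (ε / 2) := by
          exact mul_lt_mul_of_pos_right h2 hε2
      _ = ε / 2 * f x := by ring
  have hnorm : ‖Real.log |deriv f x| / f x‖ = |Real.log (v x)| / f x := by
    rw [hlogd, Real.norm_eq_abs, abs_div, abs_neg, abs_of_pos hfxpos]
  rw [hnorm]
  have hq : |Real.log (v x)| / f x ≤ (ε / 2 * f x + M) / f x :=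
    (div_le_div_iff_of_pos_right hfxpos).mpr hb
  have heq2 : (ε / 2 * f x + M) / f x = ε / 2 + M / f x := by
    rw [add_div, mul_div_assoc, div_self hfxpos.ne', mul_one]
  rw [heq2] at hq
  linarith
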